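/- arXiv:1407.2593 — 2 statements merged into one kernel-verified Lean document; each statement's English description precedes it below -/
import Mathlib

section
/- Among optimal solutions of the dual BCC model, a solution minimizes the number of indices j with zero slack t_j = 0 if and only if its zero-slack index set equals the intersection over all dual optimal solutions of their zero-slack index sets. -/
open Finset

private lemma half_sum_mul {N : ℕ} (a b c : Fin N → ℝ) :
    ∑ i, ((a i + b i) / 2) * c i
      = (∑ i, a i * c i) / 2 + (∑ i, b i * c i) / 2 := by
  have key : ∀ i : Fin N, (a i + b i) / 2 * c i = a i * c i / 2 + b i * c i / 2 :=
    fun i => by ring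
  rw [Finset.sum_congr rfl (fun i _ => key i), Finset.sum_add_distrib,
    ← Finset.sum_div, ← Finset.sum_div]

/-- Among optimal solutions of the dual BCC model, a solution minimizes the
number of zero slacks iff its zero-slack index set equals the intersection
over all dual optimal solutions of their zero-slack index sets. -/
theorem min_zero_slack_iff_intersection (m s n : ℕ) (o : Fin n)
    (x : Fin n → Fin m → ℝ) (y : Fin n → Fin s → ℝ)
    (DualFeasible : (Fin m → ℝ) → (Fin s → ℝ) → ℝ → (Fin n → ℝ) → Prop)
    (hFeas : ∀ V U u0 tS, DualFeasible V U u0 tS ↔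
      ((∑ i, V i * x o i) = 1 ∧
       (∀ j, (∑ r, U r * y j r) - (∑ i, V i * x j i) + u0 + tS j = 0) ∧
       (∀ r, 0 ≤ U r) ∧ (∀ i, 0 ≤ V i) ∧ (∀ j, 0 ≤ tS j)))
    (DualOptimal : (Fin m → ℝ) → (Fin s → ℝ) → ℝ → (Fin n → ℝ) → Prop)
    (hOpt : ∀ V U u0 tS, DualOptimal V U u0 tS ↔
      (DualFeasible V U u0 tS ∧
       ∀ V' U' u0' tS', DualFeasible V' U' u0' tS' →
         (∑ r, U' r * y o r) + u0' ≤ (∑ r, U r * y o r) + u0))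
    (hne : ∃ V U u0 tS, DualOptimal V U u0 tS)
    (V : Fin m → ℝ) (U : Fin s → ℝ) (u0 : ℝ) (tS : Fin n → ℝ)
    (h : DualOptimal V U u0 tS) :
    (∀ V' U' u0' tS', DualOptimal V' U' u0' tS' →
        Set.ncard {j | tS j = 0} ≤ Set.ncard {j | tS' j = 0}) ↔
      {j | tS j = 0} =
        {j | ∀ V' U' u0' tS', DualOptimal V' U' u0' tS' → tS' j = 0} := by
  constructor
  · intro hmin
    ext j
    simp only [Set.mem_setOf_eq]
    constructor
    · intro hj V' U' u0' tS' h'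
      obtain ⟨hfeas, hopt⟩ := (hOpt V U u0 tS).mp h
      obtain ⟨hfeas', hopt'⟩ := (hOpt V' U' u0' tS').mp h'
      have hle : (∑ r, U' r * y o r) + u0' ≤ (∑ r, U r * y o r) + u0 :=
        hopt V' U' u0' tS' hfeas'
      have hge : (∑ r, U r * y o r) + u0 ≤ (∑ r, U' r * y o r) + u0' :=
        hopt' V U u0 tS hfeas
      rw [hFeas] at hfeas hfeas'
      obtain ⟨h1, h2, h3, h4, h5⟩ := hfeas
      obtain ⟨h1', h2', h3', h4', h5'⟩ := hfeas'
      set V'' : Fin m → ℝ := fun i => (V i + V' i) / 2 with hV''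
      set U'' : Fin s → ℝ := fun r => (U r + U' r) / 2 with hU''
      set t'' : Fin n → ℝ := fun k => (tS k + tS' k) / 2 with ht''
      have hfeas'' : DualFeasible V'' U'' ((u0 + u0') / 2) t'' := by
        rw [hFeas]
        refine ⟨?_, ?_, ?_, ?_, ?_⟩
        · simp only [hV'']
          rw [half_sum_mul, h1, h1']; norm_num
        · intro k
          have e1 := h2 k
          have e2 := h2' k
          simp only [hU'', hV'', ht'']
          rw [half_sum_mul, half_sum_mul]
          linarith
        · intro r; have := h3 r; have := h3' r
          show 0 ≤ (U r + U' r) / 2; linarith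
        · intro i; have := h4 i; have := h4' i
          show 0 ≤ (V i + V' i) / 2; linarith
        · intro k; have := h5 k; have := h5' k
          show 0 ≤ (tS k + tS' k) / 2; linarith
      have hopt'' : DualOptimal V'' U'' ((u0 + u0') / 2) t'' := by
        rw [hOpt]
        refine ⟨hfeas'', ?_⟩
        intro Va Ua ua ta hfa
        have := hopt Va Ua ua ta hfa
        have hsum : (∑ r, U'' r * y o r) + (u0 + u0') / 2
            = ((∑ r, U r * y o r) + u0) / 2 + ((∑ r, U' r * y o r) + u0') / 2 := by
          simp only [hU'']
          rw [half_sum_mul]; ring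
        rw [hsum]; linarith
      have hcard := hmin V'' U'' ((u0 + u0') / 2) t'' hopt''
      have hset : {k | t'' k = 0} = {k | tS k = 0} ∩ {k | tS' k = 0} := by
        ext k
        simp only [Set.mem_setOf_eq, Set.mem_inter_iff, ht'']
        constructor
        · intro hk
          have := h5 k; have := h5' k
          constructor <;> linarith
        · rintro ⟨ha, hb⟩
          rw [ha, hb]; norm_num
      rw [hset] at hcard
      have heq2 : {k | tS k = 0} ∩ {k | tS' k = 0} = {k | tS k = 0} :=
        Set.eq_of_subset_of_ncard_le Set.inter_subset_left hcard (Set.toFinite _)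
      have hjj : j ∈ {k | tS k = 0} ∩ {k | tS' k = 0} := by
        rw [heq2]; exact hj
      exact hjj.2
    · intro hj
      exact hj V U u0 tS h
  · intro heq V' U' u0' tS' h'
    apply Set.ncard_le_ncard _ (Set.toFinite _)
    rw [heq]
    intro k hk
    exact hk V' U' u0' tS' h'
end

section
/- Pareto-efficiency of additive-model reference DMUs: if λ* is optimal for the additive model evaluating DMU_o and λ*_k > 0, then DMU_k is itself additive-efficient, i.e., the optimal value of the additive model evaluating DMU_k is zero. -/
open Finset

/-- Pareto-efficiency of additive-model reference DMUs: if (λ*, s⁻, s⁺) is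
optimal for the additive model evaluating DMU_o and λ*_k > 0, then DMU_k is
additive-efficient (the additive model evaluating DMU_k has optimal value 0). -/
theorem additive_reference_DMUs_efficient (m s n : ℕ) (o k : Fin n)
    (x : Fin n → Fin m → ℝ) (y : Fin n → Fin s → ℝ)
    (hx : ∀ j i, 0 ≤ x j i) (hy : ∀ j r, 0 ≤ y j r)
    (Feasible : Fin n → (Fin n → ℝ) → (Fin m → ℝ) → (Fin s → ℝ) → Prop)
    (hFeas : ∀ p lam sm sp, Feasible p lam sm sp ↔
      ((∀ i, (∑ j, lam j * x j i) + sm i = x p i) ∧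
       (∀ r, (∑ j, lam j * y j r) - sp r = y p r) ∧
       (∑ j, lam j = 1) ∧ (∀ j, 0 ≤ lam j) ∧
       (∀ i, 0 ≤ sm i) ∧ (∀ r, 0 ≤ sp r)))
    (lamStar : Fin n → ℝ) (smStar : Fin m → ℝ) (spStar : Fin s → ℝ)
    (hFeasStar : Feasible o lamStar smStar spStar)
    (hOptStar : ∀ lam sm sp, Feasible o lam sm sp →
      (∑ i, sm i) + (∑ r, sp r) ≤ (∑ i, smStar i) + (∑ r, spStar r))
    (hk : 0 < lamStar k) :
    IsGreatest {v : ℝ | ∃ lam sm sp, Feasible k lam sm sp ∧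
        v = (∑ i, sm i) + (∑ r, sp r)}
      0 := by
  rw [hFeas] at hFeasStar
  obtain ⟨hxo, hyo, hsum, hlnn, hsmnn, hspnn⟩ := hFeasStar
  constructor
  · refine ⟨fun j => if j = k then 1 else 0, 0, 0, ?_, by simp⟩
    rw [hFeas]
    refine ⟨fun i => by simp [ite_mul], fun r => by simp [ite_mul], by simp,
      fun j => by positivity, fun i => le_refl 0, fun r => le_refl 0⟩
  · rintro v ⟨lam, sm, sp, hF, rfl⟩
    rw [hFeas] at hF
    obtain ⟨hxk, hyk, hsum', hlnn', hsmnn', hspnn'⟩ := hF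
    set c := lamStar k with hc
    have hsplit : ∀ (f : Fin n → ℝ),
        (∑ j, (lamStar j + c * lam j - (if j = k then c else 0)) * f j)
          = (∑ j, lamStar j * f j) + c * (∑ j, lam j * f j) - c * f k := by
      intro f
      simp only [sub_mul, add_mul, Finset.sum_sub_distrib, Finset.sum_add_distrib,
        Finset.mul_sum, ite_mul, zero_mul, Finset.sum_ite_eq', Finset.mem_univ, if_pos,
        mul_assoc]
    have key := hOptStar (fun j => lamStar j + c * lam j - (if j = k then c else 0))
      (fun i => smStar i + c * sm i) (fun r => spStar r + c * sp r) ?_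
    · have e1 : (∑ i, (smStar i + c * sm i)) = (∑ i, smStar i) + c * (∑ i, sm i) := by
        rw [Finset.sum_add_distrib, Finset.mul_sum]
      have e2 : (∑ r, (spStar r + c * sp r)) = (∑ r, spStar r) + c * (∑ r, sp r) := by
        rw [Finset.sum_add_distrib, Finset.mul_sum]
      simp only [e1, e2] at key
      nlinarith [key, hk]
    · rw [hFeas]
      refine ⟨fun i => ?_, fun r => ?_, ?_, fun j => ?_, fun i => ?_, fun r => ?_⟩
      · have := hxo i; have := hxk i
        rw [hsplit]
        nlinarith
      · have := hyo r; have := hyk r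
        rw [hsplit]
        nlinarith
      · have : (∑ j, (lamStar j + c * lam j - (if j = k then c else 0)))
            = (∑ j, lamStar j) + c * (∑ j, lam j) - c := by
          simp [Finset.sum_sub_distrib, Finset.sum_add_distrib, Finset.mul_sum]
        rw [this, hsum, hsum']; ring
      · by_cases h : j = k
        · subst h
          have := hlnn' j
          rw [if_pos rfl]
          nlinarith
        · have := hlnn j; have := hlnn' j
          simp only [if_neg h]
          nlinarith
      · have := hsmnn i; have := hsmnn' i; nlinarith
      · have := hspnn r; have := hspnn' r; nlinarith
end
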